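/- Let X ∈ ℝ^{N×p}, Y ∈ ℝ^N, and M ∈ ℝ^{N×p} with Xᵀ M = Mᵀ M and Mᵀ M invertible and Xᵀ X − Mᵀ M invertible. If (β̂, K̂) satisfies the normal equations Xᵀ X β̂ + Xᵀ(X − M) K̂ = Xᵀ Y and Xᵀ(X − M) β̂ + Xᵀ(X − M) K̂ = (X − M)ᵀ Y, then β̂ = (Mᵀ M)⁻¹ Mᵀ Y and K̂ = (Xᵀ X − Mᵀ M)⁻¹ Xᵀ (Y − X β̂). -/
import Mathlib


open Matrix

/-- Closed-form solution of the normal equations of empirical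
Generative Invariance. -/
theorem closed_form_estimators (N p : ℕ)
    (X M : Matrix (Fin N) (Fin p) ℝ) (Y : Fin N → ℝ)
    (hXM : Xᵀ * M = Mᵀ * M)
    (hMM : IsUnit (Mᵀ * M))
    (hXXMM : IsUnit (Xᵀ * X - Mᵀ * M))
    (β K : Fin p → ℝ)
    (heq1 : (Xᵀ * X) *ᵥ β + (Xᵀ * (X - M)) *ᵥ K = Xᵀ *ᵥ Y)
    (heq2 : (Xᵀ * (X - M)) *ᵥ β + (Xᵀ * (X - M)) *ᵥ K = (X - M)ᵀ *ᵥ Y) :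
    β = (Mᵀ * M)⁻¹ *ᵥ (Mᵀ *ᵥ Y) ∧
    K = (Xᵀ * X - Mᵀ * M)⁻¹ *ᵥ (Xᵀ *ᵥ (Y - X *ᵥ β)) := by
  have hA : Xᵀ * (X - M) = Xᵀ * X - Mᵀ * M := by
    rw [Matrix.mul_sub, hXM]
  have hβ : (Mᵀ * M) *ᵥ β = Mᵀ *ᵥ Y := by
    have h := congrArg₂ (· - ·) heq1 heq2
    simp only [add_sub_add_right_eq_sub, hA, Matrix.transpose_sub,
      Matrix.sub_mulVec] at h
    simpa [sub_sub_cancel] using h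
  have hK : (Xᵀ * X - Mᵀ * M) *ᵥ K = Xᵀ *ᵥ (Y - X *ᵥ β) := by
    rw [Matrix.mulVec_sub, Matrix.mulVec_mulVec]
    have := heq1
    rw [hA] at this
    linear_combination (norm := module) this
  have hMMdet := (Matrix.isUnit_iff_isUnit_det _).mp hMM
  have hXXdet := (Matrix.isUnit_iff_isUnit_det _).mp hXXMM
  constructor
  · rw [← hβ, Matrix.mulVec_mulVec, Matrix.nonsing_inv_mul _ hMMdet, Matrix.one_mulVec]
  · rw [← hK, Matrix.mulVec_mulVec, Matrix.nonsing_inv_mul _ hXXdet, Matrix.one_mulVec]
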